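/- Suppose the stacked Hankel data matrix H of order T_p+1 built from a trajectory of an observable SISO LTI system of order n satisfies rank(H) = T_p + 1 + n with T_p ≥ n. Then the column space of H equals the restricted behavior B|_{T_p+1} (suitably reordered); i.e., every (T_p+1)-long trajectory of the system is a linear combination of columns of H, and conversely. -/

import Mathlib

open Matrix

def InBehavior {n : ℕ} (A : Matrix (Fin n) (Fin n) ℝ) (B C : Fin n → ℝ) (D : ℝ)
    (T : ℕ) (p : (Fin T → ℝ) × (Fin T → ℝ)) : Prop :=
  ∃ x : ℕ → Fin n → ℝ,
    (∀ t : Fin T, x ((t : ℕ) + 1) = A.mulVec (x t) + p.1 t • B) ∧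
    (∀ t : Fin T, p.2 t = C ⬝ᵥ x t + D * p.1 t)

def Observable {n : ℕ} (A : Matrix (Fin n) (Fin n) ℝ) (C : Fin n → ℝ) : Prop :=
  ∀ x0 : Fin n → ℝ, (∀ k < n, C ⬝ᵥ (A ^ k).mulVec x0 = 0) → x0 = 0

namespace ColSpaceAux

variable {n : ℕ} (A : Matrix (Fin n) (Fin n) ℝ) (B : Fin n → ℝ)

/-- state sequence from initial state `x0` and input `u` -/
def st (x0 : Fin n → ℝ) (u : ℕ → ℝ) : ℕ → Fin n → ℝ
  | 0 => x0
  | (t + 1) => A.mulVec (st x0 u t) + u t • B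

/-- extend a finite input to ℕ by zero -/
def ext (T : ℕ) (u : Fin T → ℝ) : ℕ → ℝ :=
  fun t => if h : t < T then u ⟨t, h⟩ else 0

lemma ext_lt {T : ℕ} (u : Fin T → ℝ) {t : ℕ} (h : t < T) : ext T u t = u ⟨t, h⟩ := by
  simp [ext, h]

lemma ext_add {T : ℕ} (u v : Fin T → ℝ) : ext T (u + v) = ext T u + ext T v := by
  funext t; by_cases h : t < T <;> simp [ext, h]

lemma ext_smul {T : ℕ} (c : ℝ) (u : Fin T → ℝ) : ext T (c • u) = c • ext T u := by
  funext t; by_cases h : t < T <;> simp [ext, h]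

lemma st_add (x0 y0 : Fin n → ℝ) (u v : ℕ → ℝ) (t : ℕ) :
    st A B (x0 + y0) (u + v) t = st A B x0 u t + st A B y0 v t := by
  induction t with
  | zero => rfl
  | succ t ih =>
      simp only [st, ih, Matrix.mulVec_add, Pi.add_apply, add_smul]
      abel

lemma st_smul (c : ℝ) (x0 : Fin n → ℝ) (u : ℕ → ℝ) (t : ℕ) :
    st A B (c • x0) (c • u) t = c • st A B x0 u t := by
  induction t with
  | zero => rfl
  | succ t ih =>
      simp only [st, ih, Matrix.mulVec_smul, Pi.smul_apply, smul_smul, smul_add, smul_eq_mul]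

/-- the "trajectory map": initial state and input to stacked (input, output) vector -/
noncomputable def Phi (C : Fin n → ℝ) (D : ℝ) (T : ℕ) :
    ((Fin n → ℝ) × (Fin T → ℝ)) →ₗ[ℝ] (Fin T ⊕ Fin T → ℝ) where
  toFun p := Sum.elim p.2
    (fun i => C ⬝ᵥ st A B p.1 (ext T p.2) (i : ℕ) + D * p.2 i)
  map_add' p q := by
    funext r
    rcases r with i | i
    · rfl
    · simp only [Sum.elim_inr, Prod.fst_add, Prod.snd_add, ext_add, st_add,
        dotProduct_add, Pi.add_apply]
      ring
  map_smul' c p := by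
    funext r
    rcases r with i | i
    · rfl
    · simp only [Sum.elim_inr, Prod.smul_fst, Prod.smul_snd, ext_smul, st_smul,
        dotProduct_smul, Pi.smul_apply, RingHom.id_apply, smul_eq_mul]
      ring

lemma mem_range_Phi_iff (C : Fin n → ℝ) (D : ℝ) (T : ℕ)
    (w : (Fin T → ℝ) × (Fin T → ℝ)) :
    Sum.elim w.1 w.2 ∈ LinearMap.range (Phi A B C D T) ↔ InBehavior A B C D T w := by
  constructor
  · rintro ⟨⟨x0, u⟩, h⟩
    have hu : ∀ i : Fin T, u i = w.1 i := fun i => congrFun h (Sum.inl i)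
    refine ⟨fun t => st A B x0 (ext T u) t, ?_, ?_⟩
    · intro t
      show st A B x0 (ext T u) (t + 1) = _
      rw [st, ext_lt u t.isLt]
      simp [hu t]
    · intro t
      have := congrFun h (Sum.inr t)
      simp only [Phi, LinearMap.coe_mk, AddHom.coe_mk, Sum.elim_inr] at this
      rw [← this, hu t]
  · rintro ⟨x, hx, hy⟩
    refine ⟨⟨x 0, w.1⟩, ?_⟩
    have key : ∀ t : ℕ, t < T → st A B (x 0) (ext T w.1) t = x t := by
      intro t ht
      induction t with
      | zero => rfl
      | succ t ih =>
          have ht' : t < T := Nat.lt_of_succ_lt ht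
          rw [st, ih ht', ext_lt w.1 ht', hx ⟨t, ht'⟩]
    funext r
    rcases r with i | i
    · rfl
    · simp only [Phi, LinearMap.coe_mk, AddHom.coe_mk, Sum.elim_inr]
      rw [key i i.isLt, ← hy i]

end ColSpaceAux

open ColSpaceAux

/-- if the stacked Hankel matrix `H` of order `T_p + 1`, built from a
trajectory of an observable SISO LTI system of order `n` with `T_p ≥ n`, satisfies
the low-rank condition `rank H = T_p + 1 + n`, then the column space of `H` equals
the restricted behavior `B|_{T_p+1}`: a pair `w` is a `(T_p+1)`-long trajectory iff
it is a linear combination of the columns of `H`. -/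
theorem column_space_eq_behavior {n Tp Td : ℕ}
    (A : Matrix (Fin n) (Fin n) ℝ) (B C : Fin n → ℝ) (D : ℝ)
    (hobs : Observable A C) (hTp : n ≤ Tp) (hTd : Tp + 1 ≤ Td)
    (ud yd : ℕ → ℝ) (xd : ℕ → Fin n → ℝ)
    (hrec : ∀ t < Td, xd (t + 1) = A.mulVec (xd t) + ud t • B)
    (hout : ∀ t < Td, yd t = C ⬝ᵥ xd t + D * ud t)
    (H : Matrix (Fin (Tp + 1) ⊕ Fin (Tp + 1)) (Fin (Td - Tp)) ℝ)
    (hHu : ∀ (i : Fin (Tp + 1)) (j : Fin (Td - Tp)), H (Sum.inl i) j = ud (i + j))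
    (hHy : ∀ (i : Fin (Tp + 1)) (j : Fin (Td - Tp)), H (Sum.inr i) j = yd (i + j))
    (hrank : H.rank = Tp + 1 + n) :
    ∀ w : (Fin (Tp + 1) → ℝ) × (Fin (Tp + 1) → ℝ),
      InBehavior A B C D (Tp + 1) w ↔
      ∃ g : Fin (Td - Tp) → ℝ, H.mulVec g = Sum.elim w.1 w.2 := by
  set Φ := Phi A B C D (Tp + 1) with hΦ
  -- every column of H is a trajectory, hence in the range of Φ
  have hcols : LinearMap.range H.mulVecLin ≤ LinearMap.range Φ := by
    rw [Matrix.range_mulVecLin, Submodule.span_le]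
    rintro _ ⟨j, rfl⟩
    -- the j-th column is Φ (xd j, u_j) where u_j i = ud (i + j)
    refine ⟨⟨xd j, fun i => ud (i + j)⟩, ?_⟩
    have hjTd : (j : ℕ) < Td - Tp := j.isLt
    have key : ∀ t : ℕ, t < Tp + 1 →
        st A B (xd j) (ext (Tp + 1) fun i => ud (i + j)) t = xd (t + j) := by
      intro t ht
      induction t with
      | zero => simp [st]
      | succ t ih =>
          have ht' : t < Tp + 1 := Nat.lt_of_succ_lt ht
          have htd : t + j < Td := by omega
          rw [st, ih ht', ext_lt _ ht']
          have := hrec (t + j) htd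
          simpa [Nat.add_right_comm] using this.symm ▸ rfl
    funext r
    rcases r with i | i
    · simp only [hΦ, Phi, LinearMap.coe_mk, AddHom.coe_mk, Sum.elim_inl, transpose_apply]
      rw [Matrix.col_apply, hHu i j]
    · simp only [hΦ, Phi, LinearMap.coe_mk, AddHom.coe_mk, Sum.elim_inr, transpose_apply]
      rw [key i i.isLt, Matrix.col_apply, hHy i j, hout (i + j) (by omega)]
  -- dimension count forces equality
  have heq : LinearMap.range H.mulVecLin = LinearMap.range Φ := by
    apply Submodule.eq_of_le_of_finrank_le hcols
    calc Module.finrank ℝ (LinearMap.range Φ)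
        ≤ Module.finrank ℝ ((Fin n → ℝ) × (Fin (Tp + 1) → ℝ)) :=
          LinearMap.finrank_range_le Φ
      _ = Tp + 1 + n := by
          rw [Module.finrank_prod, Module.finrank_fin_fun, Module.finrank_fin_fun]; omega
      _ = H.rank := hrank.symm
      _ = Module.finrank ℝ (LinearMap.range H.mulVecLin) := rfl
  intro w
  rw [← mem_range_Phi_iff, ← heq]
  constructor
  · rintro ⟨g, hg⟩; exact ⟨g, hg⟩
  · rintro ⟨g, hg⟩; exact ⟨g, hg⟩
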